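/- Suppose G is a finite group such that every nontrivial complex representation of G has dimension at least |G|^β for some β > 0, and suppose μ is a symmetric probability measure on G with μ^n(1) ≤ |G|^(−(1−β/2)) for some even integer n. Then every eigenvalue α ≠ 1 of the convolution operator T_μ on ℓ²(G) satisfies α^n ≤ |G|^(−β/2), hence |α| ≤ |G|^(−β/(2n)). -/

import Mathlib

variable {G : Type*}

/-- Convolution of two functions on a finite group. -/
noncomputable def conv [Group G] [Fintype G] (μ ν : G → ℝ) : G → ℝ :=
  fun g => ∑ x : G, μ (g * x⁻¹) * ν x

/-- `n`-fold convolution power of a function on a finite group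
(`convPow μ 0` is the Dirac mass at the identity). -/
noncomputable def convPow [Group G] [Fintype G] [DecidableEq G] (μ : G → ℝ) : ℕ → G → ℝ
  | 0 => fun g => if g = 1 then 1 else 0
  | n + 1 => conv μ (convPow μ n)

section Aux
set_option linter.unusedSectionVars false
variable [Group G] [Fintype G] [DecidableEq G]

lemma convPow_matrix_pow (μ : G → ℝ)
    (M : Matrix G G ℝ) (hM : M = fun x y => μ (x * y⁻¹)) (k : ℕ) (x y : G) :
    (M ^ k) x y = convPow μ k (x * y⁻¹) := by
  rw [show (fun x y => μ (x * y⁻¹)) = Matrix.of (fun x y : G => μ (x * y⁻¹)) from rfl] at hM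
  subst hM
  induction k generalizing x y with
  | zero =>
    simp only [pow_zero, Matrix.one_apply, convPow]
    by_cases h : x = y
    · simp [h]
    · rw [if_neg h, if_neg (fun h' => h (mul_inv_eq_one.mp h'))]
  | succ k ih =>
    rw [pow_succ', Matrix.mul_apply]
    show _ = conv μ (convPow μ k) (x * y⁻¹)
    unfold conv
    rw [← Equiv.sum_comp (Equiv.mulRight y⁻¹)
      (fun w => μ (x * y⁻¹ * w⁻¹) * convPow μ k w)]
    apply Finset.sum_congr rfl
    intro z _
    simp only [Equiv.coe_mulRight, Matrix.of_apply]
    rw [ih]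
    congr 2
    group

/-- Right translation as a linear endomorphism of `EuclideanSpace ℂ G`. -/
noncomputable def Rmap (g : G) : EuclideanSpace ℂ G →ₗ[ℂ] EuclideanSpace ℂ G where
  toFun f := WithLp.toLp 2 (fun x => f (x * g))
  map_add' _ _ := rfl
  map_smul' _ _ := rfl

/-- Convolution matrix as a linear endomorphism of `EuclideanSpace ℂ G`. -/
noncomputable def Tlin (A : Matrix G G ℂ) :
    EuclideanSpace ℂ G →ₗ[ℂ] EuclideanSpace ℂ G where
  toFun f := WithLp.toLp 2 (A.mulVec f)
  map_add' f h := congrArg (WithLp.toLp 2) (Matrix.mulVec_add A f h)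
  map_smul' c f := congrArg (WithLp.toLp 2) (Matrix.mulVec_smul A c f)

/-- The eigenspace of a matrix acting on `EuclideanSpace ℂ G`. -/
noncomputable def Espace (A : Matrix G G ℂ) (a : ℂ) : Submodule ℂ (EuclideanSpace ℂ G) :=
  LinearMap.ker (Tlin A - a • LinearMap.id)

lemma mem_Espace (A : Matrix G G ℂ) (a : ℂ) (f : EuclideanSpace ℂ G) :
    f ∈ Espace A a ↔ A.mulVec f = a • f := by
  simp only [Espace, LinearMap.mem_ker, LinearMap.sub_apply, LinearMap.smul_apply,
    LinearMap.id_apply, sub_eq_zero]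
  exact ⟨fun h => congrArg WithLp.ofLp h, fun h => congrArg (WithLp.toLp 2) h⟩

lemma Rmap_mem_Espace (μ : G → ℝ) (a : ℂ) (g : G) (f : EuclideanSpace ℂ G)
    (hf : f ∈ Espace (Matrix.of fun x y => (μ (x * y⁻¹) : ℂ)) a) :
    Rmap g f ∈ Espace (Matrix.of fun x y => (μ (x * y⁻¹) : ℂ)) a := by
  rw [mem_Espace] at hf ⊢
  funext x
  have hx : ∑ z : G, (μ ((x * g) * z⁻¹) : ℂ) * f z = a * f (x * g) := congrFun hf (x * g)
  show ∑ y : G, (μ (x * y⁻¹) : ℂ) * f (y * g) = a * f (x * g)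
  calc ∑ y : G, (μ (x * y⁻¹) : ℂ) * f (y * g)
      = ∑ z : G, (μ (x * ((Equiv.mulRight g⁻¹) z)⁻¹) : ℂ) * f ((Equiv.mulRight g⁻¹) z * g) :=
        (Equiv.sum_comp (Equiv.mulRight g⁻¹) fun y => (μ (x * y⁻¹) : ℂ) * f (y * g)).symm
    _ = ∑ z : G, (μ ((x * g) * z⁻¹) : ℂ) * f z := by
        apply Finset.sum_congr rfl
        intro z _
        simp only [Equiv.coe_mulRight]
        congr 2
        · group
        · group
    _ = a * f (x * g) := hx

/-- The representation of `G` on the eigenspace by right translations. -/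
noncomputable def rhoE (μ : G → ℝ) (a : ℂ) :
    Representation ℂ G (Espace (Matrix.of fun x y => (μ (x * y⁻¹) : ℂ)) a) where
  toFun g := (Rmap g).restrict (fun f hf => Rmap_mem_Espace μ a g f hf)
  map_one' := by
    ext f x
    exact congrArg _ (mul_one x)
  map_mul' g h := by
    ext f x
    exact congrArg _ (mul_assoc x g h).symm

/-- Transport a representation along a linear equivalence. -/
noncomputable def repConj {V W : Type*} [AddCommGroup V] [Module ℂ V]
    [AddCommGroup W] [Module ℂ W] (ρ : Representation ℂ G V) (e : V ≃ₗ[ℂ] W) :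
    Representation ℂ G W where
  toFun g := e.conj (ρ g)
  map_one' := by
    show e.conj (ρ 1) = 1
    rw [map_one ρ]
    rw [show (1 : Module.End ℂ V) = LinearMap.id from rfl, e.conj_id]
    rfl
  map_mul' g h := by
    show e.conj (ρ (g * h)) = e.conj (ρ g) * e.conj (ρ h)
    rw [map_mul ρ, Module.End.mul_eq_comp, Module.End.mul_eq_comp]
    exact e.conj_comp (ρ h) (ρ g)

lemma repConj_ne_one {V W : Type*} [AddCommGroup V] [Module ℂ V]
    [AddCommGroup W] [Module ℂ W] (ρ : Representation ℂ G V) (e : V ≃ₗ[ℂ] W)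
    (hρ : ρ ≠ 1) : repConj ρ e ≠ 1 := by
  intro h
  apply hρ
  ext g : 1
  have h2 : e.conj (ρ g) = 1 := congrFun (congrArg DFunLike.coe h) g
  have h3 : e.conj LinearMap.id = (1 : Module.End ℂ W) := e.conj_id
  have h4 := e.conj.injective (h2.trans h3.symm)
  exact h4.trans rfl

end Aux

/-- **Spectral gap from quasirandomness and return probability.** If every nontrivial
complex representation of the finite group `G` has dimension at least `|G|^β`, and the
symmetric probability measure `μ` (whose support generates `G`) satisfies
`μ^n(1) ≤ |G|^(−(1−β/2))` for some even `n ≥ 1`, then every eigenvalue `α ≠ 1` of the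
convolution operator `T_μ` satisfies `α^n ≤ |G|^(−β/2)`, hence `|α| ≤ |G|^(−β/(2n))`. -/
theorem spectral_gap_from_quasirandomness [Group G] [Fintype G] [DecidableEq G]
    (β : ℝ) (hβ0 : 0 < β) (hβ1 : β < 1)
    (hrep : ∀ (V : Type) [AddCommGroup V] [Module ℂ V] [FiniteDimensional ℂ V]
      (ρ : Representation ℂ G V), ρ ≠ 1 →
        (Fintype.card G : ℝ) ^ β ≤ (Module.finrank ℂ V : ℝ))
    (μ : G → ℝ) (hnn : ∀ x, 0 ≤ μ x) (hsum : ∑ x : G, μ x = 1)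
    (hsymm : ∀ x : G, μ x⁻¹ = μ x)
    (hgen : Subgroup.closure {x : G | μ x ≠ 0} = ⊤)
    (n : ℕ) (hn : 1 ≤ n) (hneven : Even n)
    (hreturn : convPow μ n 1 ≤ (Fintype.card G : ℝ) ^ (-(1 - β / 2)))
    (M : Matrix G G ℝ) (hM : M = fun x y => μ (x * y⁻¹))
    (α : ℝ) (hα : α ≠ 1)
    (heig : ∃ f : G → ℝ, f ≠ 0 ∧ M.mulVec f = α • f) :
    α ^ n ≤ (Fintype.card G : ℝ) ^ (-(β / 2)) ∧
      |α| ≤ (Fintype.card G : ℝ) ^ (-(β / (2 * n))) := by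
  classical
  obtain ⟨f, hf0, hf⟩ := heig
  set c : ℝ := (Fintype.card G : ℝ) with hc
  have hc0 : (0 : ℝ) < c := by
    simp only [hc, Nat.cast_pos]; exact Fintype.card_pos
  set A : Matrix G G ℂ := Matrix.of fun x y => (μ (x * y⁻¹) : ℂ) with hA
  set E : Submodule ℂ (EuclideanSpace ℂ G) := Espace A (α : ℂ) with hE
  set fC : EuclideanSpace ℂ G := WithLp.toLp 2 (fun x => (f x : ℂ)) with hfC
  have hfCE : fC ∈ E := by
    rw [hE, mem_Espace]
    funext x
    have hx : ∑ y : G, μ (x * y⁻¹) * f y = α * f x := by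
      have := congrFun hf x
      simpa [hM, Matrix.mulVec, dotProduct] using this
    show ∑ y : G, (μ (x * y⁻¹) : ℂ) * (f y : ℂ) = (α : ℂ) * (f x : ℂ)
    exact_mod_cast congrArg Complex.ofReal hx
  have hfC0 : fC ≠ 0 := by
    intro h
    apply hf0
    funext x
    have h2 : (f x : ℂ) = 0 := congrArg (fun v : EuclideanSpace ℂ G => v x) h
    show f x = 0
    exact_mod_cast h2
  have hfin : FiniteDimensional ℂ ↥E := inferInstance
  set m : ℕ := Module.finrank ℂ ↥E with hm
  -- nontriviality of the representation on E
  have hrho_ne : rhoE μ (α : ℂ) ≠ 1 := by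
    intro h1
    have hconst : ∀ g : G, fC g = fC 1 := by
      intro g
      have h2 : rhoE μ (α : ℂ) g = 1 := by rw [h1]; rfl
      have h3 : (((rhoE μ (α : ℂ)) g) ⟨fC, hfCE⟩ : EuclideanSpace ℂ G) = fC := by
        rw [h2]; rfl
      have h4 : fC (1 * g) = fC 1 := congrArg (fun v : EuclideanSpace ℂ G => v 1) h3
      rwa [one_mul] at h4
    have h6 : ∑ y : G, (μ (1 * y⁻¹) : ℂ) * fC y = (α : ℂ) * fC 1 :=
      congrFun ((mem_Espace A (α : ℂ) fC).mp hfCE) 1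
    have h7 : ∑ y : G, (μ (1 * y⁻¹) : ℂ) * fC y = fC 1 := by
      have hy : ∀ y : G, (μ (1 * y⁻¹) : ℂ) * fC y = (μ y : ℂ) * fC 1 := by
        intro y
        rw [one_mul, hsymm, hconst y]
      rw [Finset.sum_congr rfl fun y _ => hy y, ← Finset.sum_mul]
      norm_cast
      rw [hsum]
      simp
    have h8 : fC 1 ≠ 0 := by
      intro h9
      apply hfC0
      ext x
      show fC x = 0
      rw [hconst x, h9]
    have h10 : (α : ℂ) = 1 := by
      have h11 := h7.symm.trans h6
      field_simp at h11
      tauto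
    exact hα (by exact_mod_cast h10)
  -- dimension bound
  have hdim : c ^ β ≤ (m : ℝ) := by
    have e := (Module.finBasis ℂ ↥E).equivFun
    have := hrep (Fin m → ℂ) (repConj (rhoE μ (α : ℂ)) e) (repConj_ne_one _ e hrho_ne)
    rwa [Module.finrank_fin_fun] at this
  -- trace bound
  have hpow_nonneg : 0 ≤ α ^ n := hneven.pow_nonneg α
  have habs : |α| ^ n = α ^ n := hneven.pow_abs α
  have htrace : (m : ℝ) * α ^ n ≤ (M ^ n).trace := by
    obtain ⟨k, hk⟩ := hneven
    set B : Matrix G G ℂ := A ^ k with hB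
    have hAH : A.IsHermitian := by
      rw [Matrix.IsHermitian]
      ext i j
      simp only [Matrix.conjTranspose_apply, hA, Matrix.of_apply]
      rw [show star ((μ (j * i⁻¹) : ℂ)) = ((μ (j * i⁻¹) : ℂ)) from Complex.conj_ofReal _]
      norm_cast
      rw [show j * i⁻¹ = (i * j⁻¹)⁻¹ by group, hsymm]
    have hBH : B.IsHermitian := hAH.pow k
    have hBentry : ∀ x y : G, star (B x y) = B y x := by
      intro x y
      conv_rhs => rw [← hBH]
      rfl
    set v := stdOrthonormalBasis ℂ ↥E with hv
    set v' : Fin m → EuclideanSpace ℂ G := fun i => (v i : EuclideanSpace ℂ G) with hv'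
    have hortho : Orthonormal ℂ v' := by
      rw [orthonormal_iff_ite]
      intro i j
      have h := (orthonormal_iff_ite.mp v.orthonormal) i j
      rwa [Submodule.coe_inner] at h
    have hgeneig : ∀ (j : ℕ) (x : EuclideanSpace ℂ G), A.mulVec x = (α : ℂ) • x →
        (A ^ j).mulVec x = ((α : ℂ) ^ j) • x := by
      intro j x hx
      induction j with
      | zero => simp [Matrix.one_mulVec]
      | succ j ihj =>
          rw [pow_succ, ← Matrix.mulVec_mulVec, hx, Matrix.mulVec_smul, ihj,
            smul_smul, ← pow_succ']
    have hEig : ∀ i : Fin m, B.mulVec (v' i) = ((α : ℂ) ^ k) • v' i := by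
      intro i
      have hmem : v' i ∈ E := (v i).2
      have hstep : A.mulVec (v' i) = (α : ℂ) • v' i := (mem_Espace A _ _).mp hmem
      rw [hB]
      exact hgeneig k (v' i) hstep
    have hdiag : ∀ y : G, (M ^ n) y y = ∑ x : G, ‖B x y‖ ^ 2 := by
      intro y
      have hAM : A = M.map Complex.ofRealHom := by
        ext i j
        simp [hA, hM, Matrix.map_apply]
        rfl
      have h1 : (A ^ n) = (M ^ n).map Complex.ofRealHom := by
        rw [hAM, ← RingHom.mapMatrix_apply, ← map_pow, RingHom.mapMatrix_apply]
      have h2 : (A ^ n) y y = ((M ^ n) y y : ℂ) := by rw [h1]; rfl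
      have h3 : (A ^ n) y y = ∑ x : G, (‖B x y‖ ^ 2 : ℂ) := by
        rw [hk, pow_add, ← hB, Matrix.mul_apply]
        apply Finset.sum_congr rfl
        intro x _
        rw [← hBentry x y, Complex.star_def, mul_comm, Complex.mul_conj,
          Complex.normSq_eq_norm_sq]
        norm_cast
      have h4 := h2.symm.trans h3
      exact_mod_cast h4
    have hcol : ∀ y : G, ∑ i : Fin m, ‖(B.mulVec (v' i)) y‖ ^ 2 ≤ ∑ x : G, ‖B x y‖ ^ 2 := by
      intro y
      set coly : EuclideanSpace ℂ G := WithLp.toLp 2 (fun x => B x y) with hcoly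
      have hBess := hortho.sum_inner_products_le (s := Finset.univ) coly
      have hnc : ‖coly‖ ^ 2 = ∑ x : G, ‖B x y‖ ^ 2 := by
        rw [EuclideanSpace.norm_eq, Real.sq_sqrt (Finset.sum_nonneg fun _ _ => sq_nonneg _)]
      have hip : ∀ i : Fin m, ‖(inner ℂ (v' i) coly : ℂ)‖ = ‖(B.mulVec (v' i)) y‖ := by
        intro i
        have heq : (inner ℂ (v' i) coly : ℂ) = star ((B.mulVec (v' i)) y) := by
          rw [PiLp.inner_apply]
          rw [show (B.mulVec (v' i)) y = ∑ x : G, B y x * v' i x from rfl]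
          rw [star_sum]
          apply Finset.sum_congr rfl
          intro x _
          rw [RCLike.inner_apply', star_mul', hBentry y x, mul_comm]
          rfl
        rw [heq, norm_star]
      calc ∑ i : Fin m, ‖(B.mulVec (v' i)) y‖ ^ 2
          = ∑ i : Fin m, ‖(inner ℂ (v' i) coly : ℂ)‖ ^ 2 := by
            exact Finset.sum_congr rfl fun i _ => by rw [hip i]
        _ ≤ ‖coly‖ ^ 2 := hBess
        _ = ∑ x : G, ‖B x y‖ ^ 2 := hnc
    have hrow : ∀ i : Fin m, ∑ y : G, ‖(B.mulVec (v' i)) y‖ ^ 2 = α ^ n := by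
      intro i
      have hone : ∑ y : G, ‖v' i y‖ ^ 2 = 1 := by
        have h5 : ‖v' i‖ = 1 := hortho.1 i
        have h6 := EuclideanSpace.norm_eq (v' i)
        rw [h5] at h6
        have h7 := congrArg (fun t : ℝ => t ^ 2) h6
        simpa [Real.sq_sqrt (Finset.sum_nonneg fun _ _ => sq_nonneg _)] using h7.symm
      calc ∑ y : G, ‖(B.mulVec (v' i)) y‖ ^ 2
          = ∑ y : G, (|α| ^ k) ^ 2 * ‖v' i y‖ ^ 2 := by
            apply Finset.sum_congr rfl
            intro y _
            rw [hEig i]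
            rw [show ((((α : ℂ) ^ k) • WithLp.ofLp (v' i)) y) = ((α : ℂ) ^ k) * v' i y from rfl]
            rw [norm_mul, mul_pow, norm_pow, Complex.norm_real, Real.norm_eq_abs]
        _ = (|α| ^ k) ^ 2 := by rw [← Finset.mul_sum, hone, mul_one]
        _ = α ^ n := by rw [← pow_mul, show k * 2 = n by omega, habs]
    have hsum2 : ∑ i : Fin m, (α ^ n : ℝ) ≤ ∑ y : G, ∑ x : G, ‖B x y‖ ^ 2 := by
      calc ∑ i : Fin m, (α ^ n : ℝ)
          = ∑ i : Fin m, ∑ y : G, ‖(B.mulVec (v' i)) y‖ ^ 2 :=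
            Finset.sum_congr rfl fun i _ => (hrow i).symm
        _ = ∑ y : G, ∑ i : Fin m, ‖(B.mulVec (v' i)) y‖ ^ 2 := Finset.sum_comm
        _ ≤ ∑ y : G, ∑ x : G, ‖B x y‖ ^ 2 := Finset.sum_le_sum fun y _ => hcol y
    have hlhs : ∑ i : Fin m, (α ^ n : ℝ) = (m : ℝ) * α ^ n := by
      rw [Finset.sum_const, Finset.card_univ, Fintype.card_fin, nsmul_eq_mul]
    have hrhs : (M ^ n).trace = ∑ y : G, ∑ x : G, ‖B x y‖ ^ 2 := by
      rw [Matrix.trace]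
      exact Finset.sum_congr rfl fun y _ => hdiag y
    rw [← hlhs, hrhs]
    exact hsum2
  have htrace2 : (M ^ n).trace = c * convPow μ n 1 := by
    rw [Matrix.trace]
    have hd : ∀ x : G, (M ^ n).diag x = convPow μ n 1 := by
      intro x
      rw [Matrix.diag_apply, convPow_matrix_pow μ M hM n x x, mul_inv_cancel]
    rw [Finset.sum_congr rfl fun x _ => hd x]
    simp [hc, mul_comm]
  -- combine
  have key : α ^ n ≤ c ^ (-(β / 2)) := by
    have h1 : (m : ℝ) * α ^ n ≤ c * c ^ (-(1 - β / 2)) := by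
      rw [htrace2] at htrace
      calc (m : ℝ) * α ^ n ≤ c * convPow μ n 1 := htrace
        _ ≤ c * c ^ (-(1 - β / 2)) :=
            mul_le_mul_of_nonneg_left hreturn (le_of_lt hc0)
    have h2 : c * c ^ (-(1 - β / 2)) = c ^ (β / 2) := by
      nth_rewrite 1 [← Real.rpow_one c]
      rw [← Real.rpow_add hc0]
      norm_num
    have h3 : c ^ β * α ^ n ≤ c ^ (β / 2) := by
      calc c ^ β * α ^ n ≤ (m : ℝ) * α ^ n :=
            mul_le_mul_of_nonneg_right hdim hpow_nonneg
        _ ≤ c ^ (β / 2) := by rw [← h2]; exact h1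
    have h4 : α ^ n ≤ c ^ (β / 2) / c ^ β := by
      rw [le_div_iff₀ (Real.rpow_pos_of_pos hc0 β)]
      linarith [h3, mul_comm (c ^ β) (α ^ n)]
    calc α ^ n ≤ c ^ (β / 2) / c ^ β := h4
      _ = c ^ (-(β / 2)) := by
          rw [← Real.rpow_sub hc0]
          congr 1
          ring
  refine ⟨key, ?_⟩
  have hn0 : n ≠ 0 := by omega
  have hrpow : (c ^ (-(β / (2 * n)))) ^ n = c ^ (-(β / 2)) := by
    rw [← Real.rpow_natCast (c ^ (-(β / (2 * n)))) n, ← Real.rpow_mul (le_of_lt hc0)]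
    congr 1
    have hcast : (n : ℝ) ≠ 0 := Nat.cast_ne_zero.mpr hn0
    field_simp
  apply le_of_pow_le_pow_left₀ hn0 (le_of_lt (Real.rpow_pos_of_pos hc0 _))
  rw [hrpow, habs]
  exact key
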